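/- For p ∈ (0,1) and z > 0 with -z·log(1-p) ≤ 1, the only fixed point of f(q) = 1 - (1-p)^{z q} in [0,1] is q = 0; in particular f(q) < q for all q ∈ (0,1]. -/
import Mathlib


/-- If `-z log(1-p) ≤ 1`, the only fixed point of `f` in `[0,1]` is `0`,
and `f(q) < q` on `(0,1]`. -/
theorem stmt_3 (p z : ℝ) (hp : p ∈ Set.Ioo (0:ℝ) 1) (hz : 0 < z)
    (hcrit : -z * Real.log (1 - p) ≤ 1) :
    (∀ q ∈ Set.Icc (0:ℝ) 1,
        1 - Real.exp (z * q * Real.log (1 - p)) = q → q = 0) ∧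
    (∀ q ∈ Set.Ioc (0:ℝ) 1,
        1 - Real.exp (z * q * Real.log (1 - p)) < q) := by
  have hlog : Real.log (1 - p) < 0 :=
    Real.log_neg (by linarith [hp.2]) (by linarith [hp.1])
  have key : ∀ q : ℝ, 0 < q → 1 - Real.exp (z * q * Real.log (1 - p)) < q := by
    intro q hq
    set x := z * q * Real.log (1 - p) with hx
    have hxneg : x < 0 := by
      have := mul_pos hz hq
      nlinarith
    have h1 : x + 1 < Real.exp x := Real.add_one_lt_exp (ne_of_lt hxneg)
    have h2 : -x ≤ q := by
      have : q * (-z * Real.log (1 - p)) ≤ q * 1 := by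
        apply mul_le_mul_of_nonneg_left hcrit hq.le
      nlinarith
    linarith
  refine ⟨?_, fun q hq => key q hq.1⟩
  intro q hq hfix
  by_contra h
  have hq0 : 0 < q := lt_of_le_of_ne hq.1 (Ne.symm h)
  exact absurd hfix (ne_of_lt (by linarith [key q hq0]))
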